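/- Let U ⊆ ℝⁿ be open, let f : U → ℝ be smooth, and for a fixed k ≥ 0 let g^{μ₁…μₖ} : U → ℝ be smooth functions symmetric in their indices. Then, with summation over all repeated greek indices, (∂_{μ₁}⋯∂_{μₖ} f) · g^{μ₁…μₖ} = Σ_{p+q=k} binom(p+q, p) (−1)^q · ∂_{μ₁}⋯∂_{μ_p}( f · ∂_{ν₁}⋯∂_{ν_q} g^{μ₁…μ_p ν₁…ν_q} ). -/

import Mathlib

open scoped BigOperators

noncomputable section

/-- Partial derivative of a function on `ℝⁿ` in the coordinate direction `μ`. -/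
def pd {n : ℕ} (μ : Fin n) (f : (Fin n → ℝ) → ℝ) : (Fin n → ℝ) → ℝ :=
  fun x => fderiv ℝ f x (Pi.single μ 1)

/-- Iterated partial derivatives `∂_{μ₁}⋯∂_{μₖ}` along a list of coordinate directions. -/
def pds {n : ℕ} : List (Fin n) → ((Fin n → ℝ) → ℝ) → (Fin n → ℝ) → ℝ
  | [], f => f
  | μ :: l, f => pd μ (pds l f)

namespace IHPF
open Finset

variable {n : ℕ} {U : Set (Fin n → ℝ)}

lemma pds_append (l₁ l₂ : List (Fin n)) (F : (Fin n → ℝ) → ℝ) :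
    pds (l₁ ++ l₂) F = pds l₁ (pds l₂ F) := by
  induction l₁ with
  | nil => rfl
  | cons a l ih => simp [pds, ih]

lemma diffAt (hU : IsOpen U) {F : (Fin n → ℝ) → ℝ} (hF : ContDiffOn ℝ (⊤ : ℕ∞) F U)
    {x : Fin n → ℝ} (hx : x ∈ U) : DifferentiableAt ℝ F x :=
  ((hF.contDiffAt (hU.mem_nhds hx)).differentiableAt (by simp))

lemma pd_contDiffOn (hU : IsOpen U) {F : (Fin n → ℝ) → ℝ}
    (hF : ContDiffOn ℝ (⊤ : ℕ∞) F U) (μ : Fin n) : ContDiffOn ℝ (⊤ : ℕ∞) (pd μ F) U := by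
  have h1 : ContDiffOn ℝ (⊤ : ℕ∞) (fderivWithin ℝ F U) U :=
    hF.fderivWithin hU.uniqueDiffOn (by exact_mod_cast le_top)
  have h2 := (ContinuousLinearMap.apply ℝ ℝ (Pi.single μ 1 : Fin n → ℝ)).contDiff.comp_contDiffOn h1
  exact h2.congr (fun x hx => by
    simp [pd, Function.comp, fderivWithin_of_isOpen hU hx])

lemma pds_contDiffOn (hU : IsOpen U) {F : (Fin n → ℝ) → ℝ}
    (hF : ContDiffOn ℝ (⊤ : ℕ∞) F U) (l : List (Fin n)) : ContDiffOn ℝ (⊤ : ℕ∞) (pds l F) U := by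
  induction l with
  | nil => exact hF
  | cons a l ih => exact pd_contDiffOn hU ih a

lemma pd_congrOn (hU : IsOpen U) {F G : (Fin n → ℝ) → ℝ} (h : ∀ y ∈ U, F y = G y)
    (μ : Fin n) {x : Fin n → ℝ} (hx : x ∈ U) : pd μ F x = pd μ G x := by
  unfold pd
  rw [Filter.EventuallyEq.fderiv_eq (Filter.eventuallyEq_of_mem (hU.mem_nhds hx) h)]

lemma pds_congrOn (hU : IsOpen U) {F G : (Fin n → ℝ) → ℝ} (h : ∀ y ∈ U, F y = G y)
    (l : List (Fin n)) {x : Fin n → ℝ} (hx : x ∈ U) : pds l F x = pds l G x := by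
  induction l generalizing x with
  | nil => exact h x hx
  | cons a l ih => exact pd_congrOn hU (fun y hy => ih hy) a hx

lemma pd_addAt {F G : (Fin n → ℝ) → ℝ} {x : Fin n → ℝ} (hF : DifferentiableAt ℝ F x)
    (hG : DifferentiableAt ℝ G x) (μ : Fin n) :
    pd μ (fun y => F y + G y) x = pd μ F x + pd μ G x := by
  simp [pd, fderiv_fun_add hF hG]

lemma pd_mulAt {F G : (Fin n → ℝ) → ℝ} {x : Fin n → ℝ} (hF : DifferentiableAt ℝ F x)
    (hG : DifferentiableAt ℝ G x) (μ : Fin n) :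
    pd μ (fun y => F y * G y) x = pd μ F x * G x + F x * pd μ G x := by
  simp [pd, fderiv_fun_mul hF hG]
  ring

lemma pds_addOn (hU : IsOpen U) {F G : (Fin n → ℝ) → ℝ} (hF : ContDiffOn ℝ (⊤ : ℕ∞) F U)
    (hG : ContDiffOn ℝ (⊤ : ℕ∞) G U) (l : List (Fin n)) {x : Fin n → ℝ} (hx : x ∈ U) :
    pds l (fun y => F y + G y) x = pds l F x + pds l G x := by
  induction l generalizing x with
  | nil => rfl
  | cons a l ih =>
    show pd a (pds l fun y => F y + G y) x = pd a (pds l F) x + pd a (pds l G) x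
    rw [pd_congrOn hU (fun y hy => ih hy) a hx]
    exact pd_addAt (diffAt hU (pds_contDiffOn hU hF l) hx)
      (diffAt hU (pds_contDiffOn hU hG l) hx) a


def cf (k a j : ℕ) (h : a + j < k) (t : Fin k) : Fin k :=
  if h1 : t.1 < a ∨ a + j < t.1 then t else if h2 : t.1 = a then ⟨a + j, h⟩
    else ⟨t.1 - 1, Nat.lt_of_le_of_lt (Nat.sub_le t.1 1) t.2⟩

def ci (k a j : ℕ) (h : a + j < k) (t : Fin k) : Fin k :=
  if h1 : t.1 < a ∨ a + j < t.1 then t else if h2 : t.1 = a + j then ⟨a, by omega⟩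
    else ⟨t.1 + 1, by omega⟩

lemma cf_out {k a j : ℕ} (h : a + j < k) {t : Fin k} (ht : t.1 < a ∨ a + j < t.1) :
    cf k a j h t = t := by simp [cf, ht]

lemma cf_eq {k a j : ℕ} (h : a + j < k) {t : Fin k} (ht : t.1 = a) :
    cf k a j h t = ⟨a + j, h⟩ := by
  have h1 : ¬(t.1 < a ∨ a + j < t.1) := by omega
  simp [cf, h1, ht]

lemma cf_mid {k a j : ℕ} (h : a + j < k) {t : Fin k} (ht1 : a < t.1) (ht2 : t.1 ≤ a + j) :
    cf k a j h t = ⟨t.1 - 1, Nat.lt_of_le_of_lt (Nat.sub_le t.1 1) t.2⟩ := by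
  have h1 : ¬(t.1 < a ∨ a + j < t.1) := by omega
  have h2 : ¬(t.1 = a) := by omega
  simp [cf, h1, h2]

lemma ci_out {k a j : ℕ} (h : a + j < k) {t : Fin k} (ht : t.1 < a ∨ a + j < t.1) :
    ci k a j h t = t := by simp [ci, ht]

lemma ci_eq {k a j : ℕ} (h : a + j < k) {t : Fin k} (ht : t.1 = a + j) :
    ci k a j h t = ⟨a, by omega⟩ := by
  have h1 : ¬(t.1 < a ∨ a + j < t.1) := by omega
  simp [ci, h1, ht]

lemma ci_mid {k a j : ℕ} (h : a + j < k) {t : Fin k} (ht1 : a ≤ t.1) (ht2 : t.1 < a + j) :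
    ci k a j h t = ⟨t.1 + 1, by omega⟩ := by
  have h1 : ¬(t.1 < a ∨ a + j < t.1) := by omega
  have h2 : ¬(t.1 = a + j) := by omega
  simp [ci, h1, h2]

def cyc (k a j : ℕ) (h : a + j < k) : Equiv.Perm (Fin k) where
  toFun := cf k a j h
  invFun := ci k a j h
  left_inv := by
    intro t
    by_cases h1 : t.1 < a ∨ a + j < t.1
    · rw [cf_out h h1, ci_out h h1]
    · by_cases h2 : t.1 = a
      · rw [cf_eq h h2, ci_eq h (by simp)]; exact Fin.ext (by simp [h2])
      · rw [cf_mid h (by omega) (by omega), ci_mid h (by simp; omega) (by simp; omega)]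
        apply Fin.ext; simp; omega
  right_inv := by
    intro t
    by_cases h1 : t.1 < a ∨ a + j < t.1
    · rw [ci_out h h1, cf_out h h1]
    · by_cases h2 : t.1 = a + j
      · rw [ci_eq h h2, cf_eq h (by simp)]; exact Fin.ext (by simp [h2])
      · rw [ci_mid h (by omega) (by omega), cf_mid h (by simp; omega) (by simp; omega)]
        apply Fin.ext; simp

lemma cyc_lt {k a j : ℕ} (h : a + j < k) {t : Fin k} (ht : t.1 < a) : cyc k a j h t = t :=
  cf_out h (Or.inl ht)

lemma cyc_gt {k a j : ℕ} (h : a + j < k) {t : Fin k} (ht : a + j < t.1) : cyc k a j h t = t :=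
  cf_out h (Or.inr ht)

lemma cyc_eq {k a j : ℕ} (h : a + j < k) {t : Fin k} (ht : t.1 = a) :
    cyc k a j h t = ⟨a + j, h⟩ := cf_eq h ht

lemma cyc_mid {k a j : ℕ} (h : a + j < k) {t : Fin k} (ht1 : a < t.1) (ht2 : t.1 ≤ a + j) :
    cyc k a j h t = ⟨t.1 - 1, Nat.lt_of_le_of_lt (Nat.sub_le t.1 1) t.2⟩ := cf_mid h ht1 ht2


lemma pascal_sum (a : ℕ) (B : ℕ → ℝ) :
    ∑ i ∈ range (a + 2), ((a + 1).choose i : ℝ) * B i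
      = ∑ i ∈ range (a + 1), (a.choose i : ℝ) * B (i + 1)
        + ∑ i ∈ range (a + 1), (a.choose i : ℝ) * B i := by
  rw [Finset.sum_range_succ' _ (a + 1), Finset.sum_range_succ' (fun i => (a.choose i : ℝ) * B i) a]
  simp only [Nat.choose_succ_succ, Nat.cast_add, add_mul, Nat.choose_zero_right, Nat.cast_one]
  rw [Finset.sum_add_distrib]
  have h1 : ∑ i ∈ range (a + 1), (a.choose (i + 1) : ℝ) * B (i + 1)
      = ∑ i ∈ range a, (a.choose (i + 1) : ℝ) * B (i + 1) := by
    rw [Finset.sum_range_succ]; simp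
  rw [h1]; ring

lemma alt_sum (m : ℕ) :
    ∑ q ∈ range (m + 1), (-1 : ℝ) ^ (m - q) * (m.choose q : ℝ)
      = if m = 0 then 1 else 0 := by
  have hint := Int.alternating_sum_range_choose (n := m)
  have hreal : ∑ q ∈ range (m + 1), (-1 : ℝ) ^ q * (m.choose q : ℝ)
      = if m = 0 then 1 else 0 := by
    exact_mod_cast congrArg (fun z : ℤ => (z : ℝ)) hint
  have key : ∀ q ∈ range (m + 1), (-1 : ℝ) ^ (m - q) * (m.choose q : ℝ)
      = (-1 : ℝ) ^ m * ((-1 : ℝ) ^ q * (m.choose q : ℝ)) := by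
    intro q hq
    have hqm : q ≤ m := by simpa [Nat.lt_succ_iff] using hq
    have hpow : (-1 : ℝ) ^ (m - q) = (-1 : ℝ) ^ m * (-1 : ℝ) ^ q := by
      have h2 : m - q + 2 * q = m + q := by omega
      calc (-1 : ℝ) ^ (m - q) = (-1 : ℝ) ^ (m - q) * (((-1 : ℝ) ^ 2) ^ q) := by norm_num
        _ = (-1 : ℝ) ^ (m - q + 2 * q) := by rw [← pow_mul, ← pow_add]
        _ = (-1 : ℝ) ^ (m + q) := by rw [h2]
        _ = (-1 : ℝ) ^ m * (-1 : ℝ) ^ q := by rw [pow_add]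
    rw [hpow]; ring
  rw [Finset.sum_congr rfl key, ← Finset.mul_sum, hreal]
  by_cases hm : m = 0 <;> simp [hm]

lemma combo (k : ℕ) (B : ℕ → ℝ) :
    ∑ p ∈ range (k + 1), (k.choose p : ℝ) * (-1 : ℝ) ^ (k - p) *
        ∑ i ∈ range (p + 1), (p.choose i : ℝ) * B i = B k := by
  have hext : ∀ p ∈ range (k + 1),
      (k.choose p : ℝ) * (-1 : ℝ) ^ (k - p) * ∑ i ∈ range (p + 1), (p.choose i : ℝ) * B i
        = ∑ i ∈ range (k + 1),
            (k.choose p : ℝ) * (-1 : ℝ) ^ (k - p) * ((p.choose i : ℝ) * B i) := by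
    intro p hp
    rw [Finset.mul_sum]
    refine Finset.sum_subset (Finset.range_subset_range.mpr ?_) ?_
    · simp only [mem_range] at hp; omega
    · intro i _ hi
      simp only [mem_range, not_lt] at hi
      have : p.choose i = 0 := Nat.choose_eq_zero_of_lt (by omega)
      simp [this]
  rw [Finset.sum_congr rfl hext, Finset.sum_comm]
  have key : ∀ i ∈ range (k + 1),
      (∑ p ∈ range (k + 1), (k.choose p : ℝ) * (-1 : ℝ) ^ (k - p) * ((p.choose i : ℝ) * B i))
        = if i = k then B k else 0 := by
    intro i hi
    have hik : i ≤ k := by simpa [Nat.lt_succ_iff] using hi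
    have hzero : ∀ p ∈ range (k + 1), p ∉ Finset.Ico i (k + 1) →
        (k.choose p : ℝ) * (-1 : ℝ) ^ (k - p) * ((p.choose i : ℝ) * B i) = 0 := by
      intro p _ hp
      simp only [Finset.mem_Ico, mem_range] at *
      have : p.choose i = 0 := Nat.choose_eq_zero_of_lt (by omega)
      simp [this]
    rw [← Finset.sum_subset (Finset.Ico_subset_Ico (Nat.zero_le i) le_rfl |>.trans
        (by rw [Finset.range_eq_Ico])) hzero]
    rw [Finset.sum_Ico_eq_sum_range]
    have hlen : k + 1 - i = (k - i) + 1 := by omega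
    rw [hlen]
    have hterm : ∀ q ∈ range ((k - i) + 1),
        (k.choose (i + q) : ℝ) * (-1 : ℝ) ^ (k - (i + q)) * (((i + q).choose i : ℝ) * B i)
          = ((k.choose i : ℝ) * B i) * ((-1 : ℝ) ^ ((k - i) - q) * ((k - i).choose q : ℝ)) := by
      intro q hq
      have hqk : q ≤ k - i := by simpa [Nat.lt_succ_iff] using hq
      have hmul : k.choose (i + q) * (i + q).choose i = k.choose i * (k - i).choose q := by
        have := Nat.choose_mul (n := k) (k := i + q) (s := i) (by omega)
        simpa [Nat.add_sub_cancel_left] using this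
      have hcast : (k.choose (i + q) : ℝ) * ((i + q).choose i : ℝ)
          = (k.choose i : ℝ) * ((k - i).choose q : ℝ) := by exact_mod_cast hmul
      have hexp : k - (i + q) = (k - i) - q := by omega
      rw [hexp]
      linear_combination ((-1 : ℝ) ^ ((k - i) - q) * B i) * hcast
    rw [Finset.sum_congr rfl hterm, ← Finset.mul_sum, alt_sum (k - i)]
    by_cases hik2 : i = k
    · subst hik2; simp
    · have : ¬(k - i = 0) := by omega
      simp [this, hik2]
  rw [Finset.sum_congr rfl key, Finset.sum_ite_eq' (range (k + 1)) k]
  simp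


noncomputable def Aterm (n k : ℕ) (f : (Fin n → ℝ) → ℝ) (g : (Fin k → Fin n) → (Fin n → ℝ) → ℝ)
    (x : Fin n → ℝ) (m : ℕ) : ℝ :=
  ∑ μ : Fin k → Fin n, pds ((List.ofFn μ).take m) f x * pds ((List.ofFn μ).drop m) (g μ) x

lemma keyC {n k : ℕ} {U : Set (Fin n → ℝ)} (hU : IsOpen U)
    (f : (Fin n → ℝ) → ℝ) (hf : ContDiffOn ℝ (⊤ : ℕ∞) f U)
    (g : (Fin k → Fin n) → (Fin n → ℝ) → ℝ)
    (hg : ∀ μ, ContDiffOn ℝ (⊤ : ℕ∞) (g μ) U)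
    (hsym : ∀ (σ : Equiv.Perm (Fin k)) (μ : Fin k → Fin n), g (μ ∘ σ) = g μ) :
    ∀ (a j : ℕ), a + j ≤ k → ∀ x ∈ U,
      ∑ μ : Fin k → Fin n, pds ((List.ofFn μ).take a)
          (fun y => pds (((List.ofFn μ).drop a).take j) f y
            * pds ((List.ofFn μ).drop (a + j)) (g μ) y) x
        = ∑ i ∈ Finset.range (a + 1), (a.choose i : ℝ) * Aterm n k f g x (i + j) := by
  intro a
  induction a with
  | zero =>
    intro j hle x hx
    simp [pds, Aterm]
  | succ a ih =>
    intro j hle x hx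
    have ha : a < k := by omega
    have haj : a + j < k := by omega
    set σ : Equiv.Perm (Fin k) := cyc k a j haj with hσ
    set F1 : (Fin k → Fin n) → (Fin n → ℝ) → ℝ := fun μ => fun y =>
      pds (((List.ofFn μ).drop a).take (j + 1)) f y
        * pds ((List.ofFn μ).drop (a + (j + 1))) (g μ) y with hF1
    set F2 : (Fin k → Fin n) → (Fin n → ℝ) → ℝ := fun μ => fun y =>
      pds (((List.ofFn μ).drop (a + 1)).take j) f y
        * pds (μ ⟨a, ha⟩ :: (List.ofFn μ).drop (a + 1 + j)) (g μ) y with hF2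
    -- Leibniz step for each summand
    have hsummand : ∀ μ : Fin k → Fin n,
        pds ((List.ofFn μ).take (a + 1))
          (fun y => pds (((List.ofFn μ).drop (a + 1)).take j) f y
            * pds ((List.ofFn μ).drop (a + 1 + j)) (g μ) y) x
        = pds ((List.ofFn μ).take a) (F1 μ) x + pds ((List.ofFn μ).take a) (F2 μ) x := by
      intro μ
      have hlen : (List.ofFn μ).length = k := by simp
      have htake : (List.ofFn μ).take (a + 1)
          = (List.ofFn μ).take a ++ [μ ⟨a, ha⟩] := by
        rw [List.take_succ]
        congr
        rw [List.getElem?_eq_getElem (by omega)]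
        simp
      have hdropa : (List.ofFn μ).drop a = μ ⟨a, ha⟩ :: (List.ofFn μ).drop (a + 1) := by
        rw [List.drop_eq_getElem_cons (by omega)]
        simp
      rw [htake, pds_append]
      have hinner : ∀ y ∈ U,
          pds [μ ⟨a, ha⟩]
            (fun y => pds (((List.ofFn μ).drop (a + 1)).take j) f y
              * pds ((List.ofFn μ).drop (a + 1 + j)) (g μ) y) y
          = F1 μ y + F2 μ y := by
        intro y hy
        show pd (μ ⟨a, ha⟩)
            (fun y => pds (((List.ofFn μ).drop (a + 1)).take j) f y
              * pds ((List.ofFn μ).drop (a + 1 + j)) (g μ) y) y = _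
        rw [pd_mulAt (diffAt hU (pds_contDiffOn hU hf _) hy)
          (diffAt hU (pds_contDiffOn hU (hg μ) _) hy)]
        have hlist1 : ((List.ofFn μ).drop a).take (j + 1)
            = μ ⟨a, ha⟩ :: ((List.ofFn μ).drop (a + 1)).take j := by
          rw [hdropa, List.take_succ_cons]
        rw [hF1, hF2]
        simp only [hlist1, show a + (j + 1) = a + 1 + j from by omega]
        rfl
      rw [pds_congrOn hU hinner _ hx]
      exact pds_addOn hU
        ((pds_contDiffOn hU hf _).mul (pds_contDiffOn hU (hg μ) _))
        ((pds_contDiffOn hU hf _).mul (pds_contDiffOn hU (hg μ) _)) _ hx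
    -- reindexing of the second piece via the cycle
    have hre : ∑ μ : Fin k → Fin n, pds ((List.ofFn μ).take a) (F2 μ) x
        = ∑ μ : Fin k → Fin n, pds ((List.ofFn μ).take a)
            (fun y => pds (((List.ofFn μ).drop a).take j) f y
              * pds ((List.ofFn μ).drop (a + j)) (g μ) y) x := by
      have hbij : Function.Bijective (fun μ : Fin k → Fin n => μ ∘ σ) := by
        constructor
        · intro p q hpq
          funext t
          have := congrFun hpq (σ.symm t)
          simpa using this
        · intro ν
          exact ⟨ν ∘ ⇑σ.symm, by funext t; simp⟩
      symm
      apply Fintype.sum_bijective _ hbij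
      intro μ
      -- list equalities
      have E1 : (List.ofFn (μ ∘ σ)).take a = (List.ofFn μ).take a := by
        apply List.ext_getElem
        · simp
        · intro t h1 h2
          simp only [List.length_take, List.length_ofFn, lt_min_iff] at h1
          simp only [List.getElem_take, List.getElem_ofFn, Function.comp_apply]
          rw [cyc_lt haj (t := ⟨t, by omega⟩) (by simpa using h1.1)]
      have E2 : ((List.ofFn (μ ∘ σ)).drop (a + 1)).take j
          = ((List.ofFn μ).drop a).take j := by
        apply List.ext_getElem
        · simp; omega
        · intro t h1 h2
          simp only [List.length_take, List.length_drop, List.length_ofFn, lt_min_iff] at h1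
          simp only [List.getElem_take, List.getElem_drop, List.getElem_ofFn,
            Function.comp_apply]
          rw [cyc_mid haj (t := ⟨a + 1 + t, by omega⟩) (by simp; omega) (by simp; omega)]
          congr 1
          apply Fin.ext
          simp
      have E3 : (μ ∘ σ) ⟨a, ha⟩ :: (List.ofFn (μ ∘ σ)).drop (a + 1 + j)
          = (List.ofFn μ).drop (a + j) := by
        have hlt : a + j < (List.ofFn μ).length := by simp; omega
        conv_rhs => rw [List.drop_eq_getElem_cons hlt]
        congr 1
        · simp only [Function.comp_apply, List.getElem_ofFn]
          rw [cyc_eq haj (t := ⟨a, ha⟩) rfl]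
        · apply List.ext_getElem
          · simp; omega
          · intro t h1 h2
            simp only [List.length_drop, List.length_ofFn] at h1
            simp only [List.getElem_drop, List.getElem_ofFn, Function.comp_apply]
            rw [cyc_gt haj (t := ⟨a + 1 + j + t, by omega⟩) (by simp; omega)]
            congr 1
            apply Fin.ext
            simp
            omega
      rw [hF2]
      simp only []
      rw [E1, E2, E3, hsym σ μ]
    -- assemble
    calc ∑ μ : Fin k → Fin n, pds ((List.ofFn μ).take (a + 1))
          (fun y => pds (((List.ofFn μ).drop (a + 1)).take j) f y
            * pds ((List.ofFn μ).drop (a + 1 + j)) (g μ) y) x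
        = ∑ μ : Fin k → Fin n, (pds ((List.ofFn μ).take a) (F1 μ) x
            + pds ((List.ofFn μ).take a) (F2 μ) x) :=
          Finset.sum_congr rfl (fun μ _ => hsummand μ)
      _ = ∑ μ : Fin k → Fin n, pds ((List.ofFn μ).take a) (F1 μ) x
            + ∑ μ : Fin k → Fin n, pds ((List.ofFn μ).take a) (F2 μ) x :=
          Finset.sum_add_distrib
      _ = ∑ i ∈ Finset.range (a + 1), (a.choose i : ℝ) * Aterm n k f g x (i + (j + 1))
            + ∑ i ∈ Finset.range (a + 1), (a.choose i : ℝ) * Aterm n k f g x (i + j) := by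
          rw [hre, ih (j + 1) (by omega) x hx, ih j (by omega) x hx]
      _ = ∑ i ∈ Finset.range (a + 1 + 1), ((a + 1).choose i : ℝ) * Aterm n k f g x (i + j) := by
          have := pascal_sum a (fun m => Aterm n k f g x (m + j))
          rw [show a + 1 + 1 = a + 2 from rfl]
          rw [this]
          congr 1
          apply Finset.sum_congr rfl
          intro i _
          rw [show i + 1 + j = i + (j + 1) from by omega]

end IHPF

theorem inverse_higher_product_formula
    (n k : ℕ) (U : Set (Fin n → ℝ)) (hU : IsOpen U)
    (f : (Fin n → ℝ) → ℝ) (hf : ContDiffOn ℝ (⊤ : ℕ∞) f U)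
    (g : (Fin k → Fin n) → (Fin n → ℝ) → ℝ)
    (hg : ∀ μ, ContDiffOn ℝ (⊤ : ℕ∞) (g μ) U)
    (hsym : ∀ (σ : Equiv.Perm (Fin k)) (μ : Fin k → Fin n), g (μ ∘ σ) = g μ) :
    ∀ x ∈ U,
      ∑ μ : Fin k → Fin n, pds (List.ofFn μ) f x * g μ x
        = ∑ p ∈ Finset.range (k + 1), (k.choose p : ℝ) * (-1 : ℝ) ^ (k - p) *
            ∑ μ : Fin k → Fin n,
              pds ((List.ofFn μ).take p)
                (fun y => f y * pds ((List.ofFn μ).drop p) (g μ) y) x := by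
  intro x hx
  have hL : ∑ μ : Fin k → Fin n, pds (List.ofFn μ) f x * g μ x
      = IHPF.Aterm n k f g x k := by
    unfold IHPF.Aterm
    apply Finset.sum_congr rfl
    intro μ _
    rw [List.take_of_length_le (by simp), List.drop_eq_nil_of_le (by simp)]
    rfl
  rw [hL]
  have hR : ∀ p ∈ Finset.range (k + 1),
      (k.choose p : ℝ) * (-1 : ℝ) ^ (k - p) *
          ∑ μ : Fin k → Fin n, pds ((List.ofFn μ).take p)
            (fun y => f y * pds ((List.ofFn μ).drop p) (g μ) y) x
        = (k.choose p : ℝ) * (-1 : ℝ) ^ (k - p) *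
            ∑ i ∈ Finset.range (p + 1), (p.choose i : ℝ) * IHPF.Aterm n k f g x i := by
    intro p hp
    congr 1
    calc ∑ μ : Fin k → Fin n, pds ((List.ofFn μ).take p)
            (fun y => f y * pds ((List.ofFn μ).drop p) (g μ) y) x
        = ∑ μ : Fin k → Fin n, pds ((List.ofFn μ).take p)
            (fun y => pds (((List.ofFn μ).drop p).take 0) f y
              * pds ((List.ofFn μ).drop (p + 0)) (g μ) y) x := by
          rfl
      _ = ∑ i ∈ Finset.range (p + 1), (p.choose i : ℝ) * IHPF.Aterm n k f g x (i + 0) :=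
          IHPF.keyC hU f hf g hg hsym p 0 (by simp only [Finset.mem_range] at hp; omega) x hx
      _ = ∑ i ∈ Finset.range (p + 1), (p.choose i : ℝ) * IHPF.Aterm n k f g x i := by simp
  rw [Finset.sum_congr rfl hR]
  exact (IHPF.combo k (fun m => IHPF.Aterm n k f g x m)).symm

end
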